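/- Let w > 0 and define, for real z and u with Set(−z,w) ≠ 0, the function F(z,u) := Set((u−1)z, w) / Set(−z, w). Then for all real u and all real z such that Set(−z,w) ≠ 0 and Set(−z/(1+w), w) ≠ 0, one has u · ∂_u F(z,u) = u z · F(z/(1+w), u) · F(z, w/(1+w)). (This is the peeling-process identity u ∂_u DAG(z,w,u) = uz · DAG(z/(1+w),w,u) · DAG(z,w,w/(1+w)).) -/

import Mathlib

noncomputable def SetGF (z w : ℝ) : ℝ :=
  ∑' n : ℕ, z ^ n / ((1 + w) ^ n.choose 2 * n.factorial)

lemma setgf_aux_summable (w : ℝ) (hw : 0 < w) (r : ℝ) (hr : 0 ≤ r) :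
    Summable (fun n : ℕ => ((n : ℝ) + 1) * r ^ n / ((1 + w) ^ n.choose 2 * n.factorial)) := by
  apply Summable.of_nonneg_of_le (fun n => by positivity) (fun n => ?_)
    (Real.summable_pow_div_factorial (2 * r))
  have h1 : (1 : ℝ) ≤ (1 + w) ^ n.choose 2 := one_le_pow₀ (by linarith)
  have hn : ((n : ℝ) + 1) ≤ 2 ^ n := by
    exact_mod_cast Nat.lt_two_pow_self (n := n)
  calc ((n : ℝ) + 1) * r ^ n / ((1 + w) ^ n.choose 2 * n.factorial)
      ≤ (2 ^ n * r ^ n) / (1 * n.factorial) := by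
        apply div_le_div₀ (by positivity) (mul_le_mul hn le_rfl (by positivity) (by positivity))
          (by positivity)
        exact mul_le_mul h1 le_rfl (by positivity) (by positivity)
    _ = (2 * r) ^ n / n.factorial := by rw [mul_pow, one_mul]

lemma setgf_summable (w : ℝ) (hw : 0 < w) (y : ℝ) :
    Summable (fun n : ℕ => y ^ n / ((1 + w) ^ n.choose 2 * n.factorial)) := by
  apply Summable.of_norm_bounded (setgf_aux_summable w hw |y| (abs_nonneg y))
  intro n
  have h : (0:ℝ) < (1 + w) ^ n.choose 2 * n.factorial := by positivity
  rw [norm_div, Real.norm_eq_abs, Real.norm_eq_abs, abs_of_pos h, abs_pow]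
  gcongr
  nlinarith [pow_nonneg (abs_nonneg y) n, Nat.cast_nonneg (α := ℝ) n]

lemma hasDerivAt_setgf (w : ℝ) (hw : 0 < w) (z u : ℝ) :
    HasDerivAt (fun t : ℝ => SetGF ((t - 1) * z) w)
      (z * SetGF ((u - 1) * z / (1 + w)) w) u := by
  set R : ℝ := |z| * (|u| + 2) + 1 with hR
  have hR1 : (1:ℝ) ≤ R := le_add_of_nonneg_left (by positivity)
  have hR0 : (0:ℝ) ≤ R := by linarith
  set D : ℕ → ℝ := fun n => (1 + w) ^ n.choose 2 * n.factorial with hD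
  have hDpos : ∀ n, (0:ℝ) < D n := fun n => by positivity
  set f : ℕ → ℝ → ℝ := fun n t => ((t - 1) * z) ^ n / D n with hf
  set f' : ℕ → ℝ → ℝ := fun n t => (n : ℝ) * ((t - 1) * z) ^ (n - 1) * z / D n with hf'
  set v : ℕ → ℝ := fun n => |z| * (((n : ℝ) + 1) * R ^ n / D n) with hv
  have hvsum : Summable v := (setgf_aux_summable w hw R hR0).mul_left |z|
  have hderiv : ∀ n t, HasDerivAt (f n) (f' n t) t := by
    intro n t
    have h : HasDerivAt (fun t : ℝ => (t - 1) * z) (1 * z) t :=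
      ((hasDerivAt_id t).sub_const 1).mul_const z
    rw [one_mul] at h
    simpa [hf, hf'] using (h.pow n).div_const (D n)
  have hbound : ∀ n t, t ∈ Metric.ball u 1 → ‖f' n t‖ ≤ v n := by
    intro n t ht
    have htz : |(t - 1) * z| ≤ R := by
      rw [abs_mul, mul_comm]
      have : |t - 1| ≤ |u| + 2 := by
        have h2 : |t - u| < 1 := by simpa [Metric.mem_ball, Real.dist_eq] using ht
        have h3 : |t - 1| ≤ |t - u| + |u - 1| := by simpa using abs_sub_le t u 1
        have h4 : |u - 1| ≤ |u - 0| + |0 - 1| := abs_sub_le u 0 1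
        simp only [sub_zero, zero_sub, abs_neg, abs_one] at h4
        linarith
      calc |z| * |t - 1| ≤ |z| * (|u| + 2) := by
            exact mul_le_mul_of_nonneg_left this (abs_nonneg z)
        _ ≤ R := by linarith
    have hkey : (n : ℝ) * |(t - 1) * z| ^ (n - 1) ≤ ((n : ℝ) + 1) * R ^ n := by
      rcases Nat.eq_zero_or_pos n with h0 | hpos
      · subst h0; simp
      · have h1 : |(t - 1) * z| ^ (n - 1) ≤ R ^ (n - 1) :=
          pow_le_pow_left₀ (abs_nonneg _) htz _
        have h2 : R ^ (n - 1) ≤ R ^ n := pow_le_pow_right₀ hR1 (Nat.sub_le n 1)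
        have h3 : (n : ℝ) ≤ (n : ℝ) + 1 := by linarith
        calc (n : ℝ) * |(t - 1) * z| ^ (n - 1) ≤ (n : ℝ) * R ^ n := by
              exact mul_le_mul_of_nonneg_left (h1.trans h2) (Nat.cast_nonneg n)
          _ ≤ ((n : ℝ) + 1) * R ^ n := by
              exact mul_le_mul_of_nonneg_right h3 (by positivity)
    have hgoal : ‖f' n t‖ = (n : ℝ) * |(t - 1) * z| ^ (n - 1) * |z| / D n := by
      show |(n : ℝ) * ((t - 1) * z) ^ (n - 1) * z / D n| = _
      rw [abs_div, abs_of_pos (hDpos n), abs_mul, abs_mul, abs_pow, Nat.abs_cast]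
    have hv' : v n = ((n : ℝ) + 1) * R ^ n * |z| / D n := by rw [hv]; ring
    rw [hgoal, hv']
    exact div_le_div₀ (by positivity)
      (mul_le_mul_of_nonneg_right hkey (abs_nonneg z)) (hDpos n) le_rfl
  have hsum0 : Summable fun n => f n u := setgf_summable w hw _
  have main : HasDerivAt (fun t => ∑' n, f n t) (∑' n, f' n u) u :=
    hasDerivAt_tsum_of_isPreconnected hvsum Metric.isOpen_ball
      (convex_ball u 1).isPreconnected (fun n t ht => hderiv n t) hbound
      (Metric.mem_ball_self one_pos) hsum0 (Metric.mem_ball_self one_pos)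
  have hfe : (fun t : ℝ => SetGF ((t - 1) * z) w) = fun t => ∑' n, f n t := rfl
  rw [hfe]
  convert main using 1
  -- z * SetGF ((u-1)*z/(1+w)) w = ∑' n, f' n u
  have hsum' : Summable fun n => f' n u :=
    Summable.of_norm_bounded hvsum (fun n => hbound n u (Metric.mem_ball_self one_pos))
  rw [hsum'.tsum_eq_zero_add]
  have h0 : f' 0 u = 0 := by simp [hf', hD]
  rw [h0, zero_add]
  rw [SetGF, ← tsum_mul_left]
  apply tsum_congr
  intro n
  have hcs : (n + 1).choose 2 = n.choose 2 + n := by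
    rw [Nat.choose_succ_succ]
    simp [Nat.choose_one_right, Nat.add_comm]
  rw [hf', hD]
  simp only [Nat.add_sub_cancel, hcs, Nat.factorial_succ, pow_add]
  have h1w : (1 : ℝ) + w ≠ 0 := by positivity
  have hfn : (n.factorial : ℝ) ≠ 0 := Nat.cast_ne_zero.mpr n.factorial_ne_zero
  have hn1 : ((n : ℝ) + 1) ≠ 0 := by positivity
  push_cast
  field_simp
  rw [mul_assoc, ← mul_pow, div_mul_cancel₀ _ h1w]

theorem peeling_identity (w : ℝ) (hw : 0 < w) (z u : ℝ)
    (h1 : SetGF (-z) w ≠ 0) (h2 : SetGF (-(z / (1 + w))) w ≠ 0) :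
    u * deriv (fun t : ℝ => SetGF ((t - 1) * z) w / SetGF (-z) w) u
      = u * z * (SetGF ((u - 1) * (z / (1 + w))) w / SetGF (-(z / (1 + w))) w)
        * (SetGF ((w / (1 + w) - 1) * z) w / SetGF (-z) w) := by
  have h1w : (0:ℝ) < 1 + w := by linarith
  have hA : (w / (1 + w) - 1) * z = -(z / (1 + w)) := by
    field_simp
    ring
  have hB : (u - 1) * (z / (1 + w)) = (u - 1) * z / (1 + w) := by ring
  have hd : deriv (fun t : ℝ => SetGF ((t - 1) * z) w / SetGF (-z) w) u
      = z * SetGF ((u - 1) * z / (1 + w)) w / SetGF (-z) w :=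
    ((hasDerivAt_setgf w hw z u).div_const (SetGF (-z) w)).deriv
  have key : SetGF ((u - 1) * z / (1 + w)) w / SetGF (-(z / (1 + w))) w
      * (SetGF (-(z / (1 + w))) w / SetGF (-z) w)
      = SetGF ((u - 1) * z / (1 + w)) w / SetGF (-z) w := by
    exact div_mul_div_cancel₀ h2
  rw [hd, hA, hB, mul_assoc (u * z), key]
  ring
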